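/- Let F : ℝ^n × A → ℝ^n with a : [0,∞) → A, and suppose s ↦ F(s, a) is bounded by M and K-Lipschitz in s uniformly in a. Fix π : ℝ^n → A such that s ↦ F(s, π(s)) is bounded and K-Lipschitz. Let s_t solve ds_t/dt = F(s_t, π(s_t)) with s_0 given, and for δt > 0 define the discretized trajectory s_δt^0 = s_0 and s_δt^{k+1} the time-δt value of the solution of d s̃/dt = F(s̃, π(s_δt^k)) started at s_δt^k. Then there exists C > 0 such that for all t ≥ 0, ‖s_t − s_δt^{⌊t/δt⌋}‖ ≤ δt · (C/K) · e^{Kt}. -/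

import Mathlib

open Real Filter

/-- Mean value bound: a solution with speed bounded by `M` moves at most `M * (b - a)`. -/
lemma frozen_speed_bound {E : Type*} [NormedAddCommGroup E] [NormedSpace ℝ E]
    (u v : ℝ → E) (M : ℝ)
    (hu : ∀ t : ℝ, 0 ≤ t → HasDerivAt u (v t) t)
    (hv : ∀ t : ℝ, 0 ≤ t → ‖v t‖ ≤ M)
    {a b : ℝ} (ha : 0 ≤ a) (hab : a ≤ b) :
    ‖u b - u a‖ ≤ M * (b - a) := by
  have h := Convex.norm_image_sub_le_of_norm_hasDerivWithin_le
    (f := u) (f' := v) (s := Set.Icc a b) (C := M)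
    (fun x hx => (hu x (le_trans ha hx.1)).hasDerivWithinAt)
    (fun x hx => hv x (le_trans ha hx.1)) (convex_Icc a b)
    (Set.left_mem_Icc.2 hab) (Set.right_mem_Icc.2 hab)
  calc ‖u b - u a‖ ≤ M * ‖b - a‖ := h
    _ = M * (b - a) := by rw [Real.norm_eq_abs, abs_of_nonneg (by linarith)]

set_option maxHeartbeats 1000000 in
/-- Convergence (with explicit error bound) of the frozen-action Euler-type discretization
of a controlled ODE to the continuous-time trajectory. -/
theorem frozen_action_discretization_error
    {n : ℕ} {A : Type*} (F : EuclideanSpace ℝ (Fin n) → A → EuclideanSpace ℝ (Fin n))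
    (pol : EuclideanSpace ℝ (Fin n) → A) (K M : ℝ) (hK : 0 < K) (hM : 0 < M)
    (hFbound : ∀ s a, ‖F s a‖ ≤ M)
    (hFlip : ∀ a, LipschitzWith (Real.toNNReal K) (fun s => F s a))
    (hFpollip : LipschitzWith (Real.toNNReal K) (fun s => F s (pol s)))
    (s₀ : EuclideanSpace ℝ (Fin n))
    (s : ℝ → EuclideanSpace ℝ (Fin n)) (hs0 : s 0 = s₀)
    (hs : ∀ t : ℝ, 0 ≤ t → HasDerivAt s (F (s t) (pol (s t))) t)
    (sd : ℝ → ℕ → EuclideanSpace ℝ (Fin n))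
    (hsd0 : ∀ δt : ℝ, 0 < δt → sd δt 0 = s₀)
    (hsd : ∀ δt : ℝ, 0 < δt → ∀ k : ℕ,
      ∃ u : ℝ → EuclideanSpace ℝ (Fin n), u 0 = sd δt k ∧
        (∀ t : ℝ, 0 ≤ t → HasDerivAt u (F (u t) (pol (sd δt k))) t) ∧
        sd δt (k + 1) = u δt) :
    ∃ C : ℝ, 0 < C ∧ ∀ δt : ℝ, 0 < δt → ∀ t : ℝ, 0 ≤ t →
      ‖s t - sd δt ⌊t / δt⌋₊‖ ≤ δt * (C / K) * Real.exp (K * t) := by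
  have hlipK : ∀ (x y : EuclideanSpace ℝ (Fin n)),
      ‖F x (pol x) - F y (pol y)‖ ≤ K * ‖x - y‖ := by
    intro x y
    have := hFpollip.dist_le_mul x y
    rwa [dist_eq_norm, dist_eq_norm, Real.coe_toNNReal K hK.le] at this
  have hlipa : ∀ (a : A) (x y : EuclideanSpace ℝ (Fin n)),
      ‖F x a - F y a‖ ≤ K * ‖x - y‖ := by
    intro a x y
    have := (hFlip a).dist_le_mul x y
    rwa [dist_eq_norm, dist_eq_norm, Real.coe_toNNReal K hK.le] at this
  refine ⟨3 * M * K, by positivity, ?_⟩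
  intro δt hδt t ht
  -- Key discrete estimate at grid points
  have key : ∀ k : ℕ, ‖s (k * δt) - sd δt k‖
      ≤ 2 * M * δt * (Real.exp (K * (k * δt)) - 1) := by
    intro k
    induction k with
    | zero => simp [hs0, hsd0 δt hδt]
    | succ k ih =>
      obtain ⟨u, hu0, hud, hunext⟩ := hsd δt hδt k
      -- speed bound for u
      have huspeed : ∀ τ : ℝ, 0 ≤ τ → ‖u τ - u 0‖ ≤ M * τ := by
        intro τ hτ
        have := frozen_speed_bound u (fun τ => F (u τ) (pol (sd δt k))) M hud
          (fun τ _ => hFbound _ _) le_rfl hτ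
        simpa using this
      set w : ℝ → EuclideanSpace ℝ (Fin n) := fun τ => s (k * δt + τ) - u τ with hw
      set w' : ℝ → EuclideanSpace ℝ (Fin n) := fun τ =>
        F (s (k * δt + τ)) (pol (s (k * δt + τ))) - F (u τ) (pol (sd δt k)) with hw'
      have hkd : (0:ℝ) ≤ k * δt := by positivity
      have hwd : ∀ τ : ℝ, 0 ≤ τ → HasDerivAt w (w' τ) τ := by
        intro τ hτ
        have h1 : HasDerivAt (fun τ => s (k * δt + τ))
            (F (s (k * δt + τ)) (pol (s (k * δt + τ)))) τ :=
          (hs (k * δt + τ) (by linarith)).comp_const_add _ _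
        exact h1.sub (hud τ hτ)
      have hcont : ContinuousOn w (Set.Icc 0 δt) := fun τ hτ =>
        ((hwd τ hτ.1).continuousAt).continuousWithinAt
      have hbound : ∀ τ ∈ Set.Ico (0:ℝ) δt, ‖w' τ‖ ≤ K * ‖w τ‖ + 2 * K * M * δt := by
        intro τ hτ
        have h1 : ‖F (s (k * δt + τ)) (pol (s (k * δt + τ))) - F (u τ) (pol (u τ))‖
            ≤ K * ‖w τ‖ := hlipK _ _
        have h2 : ‖F (u τ) (pol (u τ)) - F (u 0) (pol (u 0))‖ ≤ K * ‖u τ - u 0‖ := hlipK _ _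
        have h3 : ‖F (u 0) (pol (sd δt k)) - F (u τ) (pol (sd δt k))‖
            ≤ K * ‖u 0 - u τ‖ := hlipa _ _ _
        have hsp : ‖u τ - u 0‖ ≤ M * τ := huspeed τ hτ.1
        have hMτ : M * τ ≤ M * δt := by nlinarith [hτ.1, hτ.2]
        have hnn : ‖u 0 - u τ‖ = ‖u τ - u 0‖ := norm_sub_rev _ _
        have hu0pol : F (u 0) (pol (u 0)) = F (u 0) (pol (sd δt k)) := by rw [hu0]
        calc ‖w' τ‖
            = ‖(F (s (k * δt + τ)) (pol (s (k * δt + τ))) - F (u τ) (pol (u τ)))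
              + (F (u τ) (pol (u τ)) - F (u 0) (pol (u 0)))
              + (F (u 0) (pol (sd δt k)) - F (u τ) (pol (sd δt k)))‖ := by
                rw [hu0pol]; congr 1; simp only [hw']; abel
          _ ≤ ‖F (s (k * δt + τ)) (pol (s (k * δt + τ))) - F (u τ) (pol (u τ))‖
              + ‖F (u τ) (pol (u τ)) - F (u 0) (pol (u 0))‖
              + ‖F (u 0) (pol (sd δt k)) - F (u τ) (pol (sd δt k))‖ := by
                exact norm_add₃_le
          _ ≤ K * ‖w τ‖ + K * (M * δt) + K * (M * δt) := by
                rw [hnn] at h3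
                have : K * ‖u τ - u 0‖ ≤ K * (M * δt) := by
                  apply mul_le_mul_of_nonneg_left (le_trans hsp hMτ) hK.le
                nlinarith [h1, h2, h3]
          _ = K * ‖w τ‖ + 2 * K * M * δt := by ring
      have hgron := norm_le_gronwallBound_of_norm_deriv_right_le hcont
        (fun τ hτ => (hwd τ hτ.1).hasDerivWithinAt) (le_refl ‖w 0‖) hbound δt
        (Set.right_mem_Icc.2 hδt.le)
      rw [gronwallBound_of_K_ne_0 hK.ne'] at hgron
      simp only [sub_zero] at hgron
      have hwδt : w δt = s ((k + 1 : ℕ) * δt) - sd δt (k + 1) := by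
        rw [hunext, hw]; push_cast; ring_nf
      have hw0 : ‖w 0‖ = ‖s (k * δt) - sd δt k‖ := by
        rw [hw]; simp [hu0]
      rw [hwδt, hw0] at hgron
      have hεK : 2 * K * M * δt / K * (Real.exp (K * δt) - 1)
          = 2 * M * δt * (Real.exp (K * δt) - 1) := by
        field_simp
      rw [hεK] at hgron
      have hexp1 : (1:ℝ) ≤ Real.exp (K * δt) := Real.one_le_exp (by positivity)
      have hexpadd : Real.exp (K * ((k + 1 : ℕ) * δt))
          = Real.exp (K * (k * δt)) * Real.exp (K * δt) := by
        rw [← Real.exp_add]; push_cast; ring_nf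
      have hexppos : 0 < Real.exp (K * (k * δt)) := Real.exp_pos _
      calc ‖s ((k + 1 : ℕ) * δt) - sd δt (k + 1)‖
          ≤ ‖s (k * δt) - sd δt k‖ * Real.exp (K * δt)
            + 2 * M * δt * (Real.exp (K * δt) - 1) := hgron
        _ ≤ 2 * M * δt * (Real.exp (K * (k * δt)) - 1) * Real.exp (K * δt)
            + 2 * M * δt * (Real.exp (K * δt) - 1) := by
              have hexppos' : 0 < Real.exp (K * δt) := Real.exp_pos _
              nlinarith [ih]
        _ = 2 * M * δt * (Real.exp (K * ((k + 1 : ℕ) * δt)) - 1) := by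
              rw [hexpadd]; ring
  -- Now the continuous-time estimate
  set k := ⌊t / δt⌋₊ with hkdef
  have hk1 : (k : ℝ) * δt ≤ t := by
    have := Nat.floor_le (div_nonneg ht hδt.le)
    calc (k : ℝ) * δt ≤ (t / δt) * δt := by
          apply mul_le_mul_of_nonneg_right this hδt.le
      _ = t := by field_simp
  have hk2 : t < ((k : ℝ) + 1) * δt := by
    have := Nat.lt_floor_add_one (t / δt)
    calc t = (t / δt) * δt := by field_simp
      _ < ((k : ℝ) + 1) * δt := by
          apply mul_lt_mul_of_pos_right this hδt
  have hkd : (0:ℝ) ≤ (k : ℝ) * δt := by positivity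
  have hseg : ‖s t - s (k * δt)‖ ≤ M * (t - k * δt) := by
    apply frozen_speed_bound s (fun τ => F (s τ) (pol (s τ))) M hs
      (fun τ _ => hFbound _ _) hkd hk1
  have hkey := key k
  have hexpk : Real.exp (K * ((k:ℝ) * δt)) ≤ Real.exp (K * t) :=
    Real.exp_le_exp.2 (mul_le_mul_of_nonneg_left hk1 hK.le)
  have hexp1 : (1:ℝ) ≤ Real.exp (K * t) := Real.one_le_exp (by positivity)
  have htri : ‖s t - sd δt k‖ ≤ ‖s t - s (k * δt)‖ + ‖s (k * δt) - sd δt k‖ :=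
    norm_sub_le_norm_sub_add_norm_sub _ _ _
  have hCK : δt * (3 * M * K / K) * Real.exp (K * t) = 3 * M * δt * Real.exp (K * t) := by
    field_simp
  rw [hCK]
  have hMt : M * (t - k * δt) ≤ M * δt :=
    mul_le_mul_of_nonneg_left (by linarith) hM.le
  nlinarith [hkey, hseg, htri, hMt,
    mul_le_mul_of_nonneg_left hexpk (by positivity : (0:ℝ) ≤ 2 * M * δt),
    mul_nonneg (by positivity : (0:ℝ) ≤ M * δt) (sub_nonneg.2 hexp1),
    mul_pos hM hδt]
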